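/- (Dual Cauchy identity, alternant form.) Let m, n ≥ 1 and work in the polynomial ring ℤ[x_1,…,x_m, y_1,…,y_n]. For each partition λ contained in the m×n box (i.e., λ : Fin m → ℕ weakly decreasing with all parts λ_i ≤ n), define μ(λ) : Fin n → ℕ by μ_j = #{i ∈ {1,…,m} : λ_i ≤ n - j} for j = 1,…,n (the conjugate of the complement of λ in the box). Then ∏_{i=1}^m ∏_{j=1}^n (x_i + y_j) · det[x_k^{m-i}]_{1≤i,k≤m} · det[y_l^{n-j}]_{1≤j,l≤n} = Σ_{λ ⊆ (n^m)} det[x_k^{λ_i + m - i}]_{1≤i,k≤m} · det[y_l^{μ(λ)_j + n - j}]_{1≤j,l≤n}. (Dividing both sides by the two Vandermonde determinants, this is the identity ∏_{i,j}(x_i + y_j) = Σ_λ s_λ(x) s_{λ̃'}(y), where λ̃' is the conjugate of the complement of λ in the m×n box.) -/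
import Mathlib


open MvPolynomial

/-- The conjugate of the complement in the `m × n` box of a partition `lam` contained in
the box: `μ_j = #{i : lam i ≤ n - j}` (here `j : Fin n` is 0-indexed, standing for the
1-indexed column `j + 1`). -/
def boxComplConj (m n : ℕ) (lam : Fin m → ℕ) (j : Fin n) : ℕ :=
  (Finset.univ.filter fun i : Fin m => lam i ≤ n - ((j : ℕ) + 1)).card

namespace DualCauchyAux

open Finset Equiv

variable (m n : ℕ)

/-- Exponents on the `x`-side: `lam i + (m - 1 - i)`. -/
def aexp (lam : Fin m → ℕ) (i : Fin m) : ℕ := lam i + (m - 1 - (i : ℕ))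

/-- Exponents on the `y`-side: `μ j + (n - 1 - j)`. -/
def bexp (lam : Fin m → ℕ) (j : Fin n) : ℕ := boxComplConj m n lam j + (n - 1 - (j : ℕ))

variable {m n}

lemma mu_add_K (lam : Fin m → ℕ) (j : Fin n) :
    boxComplConj m n lam j
      + (Finset.univ.filter fun i : Fin m => n - ((j : ℕ) + 1) < lam i).card = m := by
  classical
  have h := Finset.card_filter_add_card_filter_not
    (s := (Finset.univ : Finset (Fin m)))
    (p := fun i : Fin m => lam i ≤ n - ((j : ℕ) + 1))
  simp only [not_le, Finset.card_univ, Fintype.card_fin] at h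
  simpa [boxComplConj] using h

lemma lt_K_iff {lam : Fin m → ℕ} (hlam : Antitone lam) (c : ℕ) (i : Fin m) :
    (i : ℕ) < (Finset.univ.filter fun i' : Fin m => c < lam i').card ↔ c < lam i := by
  classical
  constructor
  · intro h
    by_contra hc
    push_neg at hc
    have hsub : (Finset.univ.filter fun i' : Fin m => c < lam i') ⊆ Finset.Iio i := by
      intro i' hi'
      simp only [Finset.mem_filter, Finset.mem_univ, true_and] at hi'
      simp only [Finset.mem_Iio]
      by_contra hge
      push_neg at hge
      exact absurd (lt_of_lt_of_le hi' (hlam hge)) (not_lt.mpr hc)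
    have := Finset.card_le_card hsub
    rw [Fin.card_Iio] at this
    omega
  · intro h
    have hsub : Finset.Iic i ⊆ (Finset.univ.filter fun i' : Fin m => c < lam i') := by
      intro i' hi'
      simp only [Finset.mem_Iic] at hi'
      simp only [Finset.mem_filter, Finset.mem_univ, true_and]
      exact lt_of_lt_of_le h (hlam hi')
    have := Finset.card_le_card hsub
    rw [Fin.card_Iic] at this
    omega

lemma mu_le (lam : Fin m → ℕ) (j : Fin n) : boxComplConj m n lam j ≤ m := by
  classical
  have := Finset.card_filter_le (Finset.univ : Finset (Fin m))
    (fun i : Fin m => lam i ≤ n - ((j : ℕ) + 1))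
  simpa [boxComplConj] using this

lemma aexp_lt {lam : Fin m → ℕ} (hbd : ∀ i, lam i ≤ n) (i : Fin m) :
    aexp m lam i < m + n := by
  have h1 := hbd i
  have h2 := i.isLt
  unfold aexp; omega

lemma bexp_lt (lam : Fin m → ℕ) (j : Fin n) : bexp m n lam j < m + n := by
  have h1 := mu_le lam j
  have h2 := j.isLt
  unfold bexp; omega

lemma aexp_strictAnti {lam : Fin m → ℕ} (hlam : Antitone lam) :
    StrictAnti (aexp m lam) := by
  intro i i' h
  have h1 : lam i' ≤ lam i := hlam h.le
  have h2 := i.isLt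
  have h3 := i'.isLt
  have h4 : (i : ℕ) < (i' : ℕ) := h
  unfold aexp; omega

lemma mu_antitone {lam : Fin m → ℕ} : Antitone (boxComplConj m n lam) := by
  classical
  intro j j' h
  apply Finset.card_le_card
  intro i hi
  simp only [Finset.mem_filter, Finset.mem_univ, true_and] at hi ⊢
  have : n - ((j' : ℕ) + 1) ≤ n - ((j : ℕ) + 1) := by
    have : (j : ℕ) ≤ (j' : ℕ) := h
    omega
  omega

lemma bexp_strictAnti (lam : Fin m → ℕ) : StrictAnti (bexp m n lam) := by
  intro j j' h
  have h1 : boxComplConj m n lam j' ≤ boxComplConj m n lam j := mu_antitone h.le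
  have h2 := j.isLt
  have h3 := j'.isLt
  have h4 : (j : ℕ) < (j' : ℕ) := h
  unfold bexp; omega

lemma aexp_ne_bexp {lam : Fin m → ℕ} (hlam : Antitone lam) (hbd : ∀ i, lam i ≤ n)
    (i : Fin m) (j : Fin n) : aexp m lam i ≠ bexp m n lam j := by
  classical
  have hK := mu_add_K lam j
  have hiff := lt_K_iff hlam (n - ((j : ℕ) + 1)) i
  have h2 := i.isLt
  have h3 := j.isLt
  have hb := hbd i
  unfold aexp bexp
  by_cases hc : n - ((j : ℕ) + 1) < lam i
  · have hik : (i : ℕ) < _ := hiff.mpr hc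
    omega
  · have hik : ¬ ((i : ℕ) < _) := fun h => hc (hiff.mp h)
    push_neg at hc hik
    omega

variable (m n) in
/-- The `x`-side exponents as elements of `Fin (m+n)`. -/
def aF (lam : Fin m → ℕ) (hbd : ∀ i, lam i ≤ n) (i : Fin m) : Fin (m + n) :=
  ⟨aexp m lam i, aexp_lt hbd i⟩

variable (m n) in
/-- The `y`-side exponents as elements of `Fin (m+n)`. -/
def bF (lam : Fin m → ℕ) (j : Fin n) : Fin (m + n) :=
  ⟨bexp m n lam j, bexp_lt lam j⟩

lemma Wb_bijective {lam : Fin m → ℕ} (hlam : Antitone lam) (hbd : ∀ i, lam i ≤ n) :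
    Function.Bijective (Sum.elim (aF m n lam hbd) (bF m n lam)) := by
  rw [Fintype.bijective_iff_injective_and_card]
  refine ⟨?_, by simp⟩
  intro c d h
  match c, d with
  | Sum.inl i, Sum.inl i' =>
    have : aexp m lam i = aexp m lam i' := congrArg Fin.val h
    exact congrArg Sum.inl ((aexp_strictAnti hlam).injective this)
  | Sum.inl i, Sum.inr j =>
    exact absurd (congrArg Fin.val h) (aexp_ne_bexp hlam hbd i j)
  | Sum.inr j, Sum.inl i =>
    exact absurd (congrArg Fin.val h).symm (aexp_ne_bexp hlam hbd i j)
  | Sum.inr j, Sum.inr j' =>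
    have : bexp m n lam j = bexp m n lam j' := congrArg Fin.val h
    exact congrArg Sum.inr ((bexp_strictAnti lam).injective this)

variable (m n) in
/-- The bijection `Fin m ⊕ Fin n ≃ Fin (m+n)` sending `inl i ↦ aexp i`, `inr j ↦ bexp j`. -/
noncomputable def bigW (lam : Fin m → ℕ) (hlam : Antitone lam) (hbd : ∀ i, lam i ≤ n) :
    (Fin m ⊕ Fin n) ≃ Fin (m + n) :=
  Equiv.ofBijective _ (Wb_bijective hlam hbd)

@[simp] lemma bigW_inl {lam : Fin m → ℕ} (hlam : Antitone lam) (hbd : ∀ i, lam i ≤ n)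
    (i : Fin m) : bigW m n lam hlam hbd (Sum.inl i) = aF m n lam hbd i := rfl

@[simp] lemma bigW_inr {lam : Fin m → ℕ} (hlam : Antitone lam) (hbd : ∀ i, lam i ≤ n)
    (j : Fin n) : bigW m n lam hlam hbd (Sum.inr j) = bF m n lam j := rfl

lemma sum_aexp_add_sum_bexp {lam : Fin m → ℕ} (hlam : Antitone lam) (hbd : ∀ i, lam i ≤ n) :
    (∑ i, aexp m lam i) + (∑ j, bexp m n lam j) = ∑ p : Fin (m + n), (p : ℕ) := by
  have h := Equiv.sum_comp (bigW m n lam hlam hbd) (fun p : Fin (m + n) => (p : ℕ))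
  rw [← h, Fintype.sum_sum_type]
  rfl

/-- Two equivs `Fin m ⊕ Fin n ≃ Fin (m+n)` agreeing on `inl` and strictly antitone
on `inr` are equal. -/
lemma range_inr_eq_compl (w : (Fin m ⊕ Fin n) ≃ Fin (m + n)) :
    Set.range (fun j => w (Sum.inr j)) = (Set.range fun k => w (Sum.inl k))ᶜ := by
  ext p
  constructor
  · rintro ⟨j, rfl⟩ ⟨k, hk⟩
    exact absurd (w.injective hk) (by simp)
  · intro hp
    obtain ⟨c, rfl⟩ := w.surjective p
    match c with
    | Sum.inl k => exact absurd ⟨k, rfl⟩ hp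
    | Sum.inr j => exact ⟨j, rfl⟩

lemma equiv_eq_of_inl_eq (u v : (Fin m ⊕ Fin n) ≃ Fin (m + n))
    (h1 : ∀ k, u (Sum.inl k) = v (Sum.inl k))
    (h2 : StrictAnti fun j => u (Sum.inr j)) (h3 : StrictAnti fun j => v (Sum.inr j)) :
    u = v := by
  have hrange : ∀ w : (Fin m ⊕ Fin n) ≃ Fin (m + n),
      Set.range (fun j => w (Sum.inr j)) = (Set.range fun k => w (Sum.inl k))ᶜ :=
    range_inr_eq_compl
  have hre : Set.range (fun j => u (Sum.inr j)) = Set.range (fun j => v (Sum.inr j)) := by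
    rw [hrange u, hrange v]
    congr 1
    ext p
    constructor <;> rintro ⟨k, rfl⟩
    · exact ⟨k, (h1 k).symm⟩
    · exact ⟨k, h1 k⟩
  have h4 : (fun j => u (Sum.inr j)) = fun j => v (Sum.inr j) :=
    (h2.range_inj h3).mp hre
  ext c
  match c with
  | Sum.inl k => exact congrArg Fin.val (h1 k)
  | Sum.inr j => exact congrArg Fin.val (congrFun h4 j)

/-- Gap estimate for strictly antitone sequences. -/
lemma strictAnti_gap {p : ℕ} {f : Fin p → ℕ} (hf : StrictAnti f) :
    ∀ (d : ℕ) (i i' : Fin p), (i' : ℕ) = (i : ℕ) + d → f i' + d ≤ f i := by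
  intro d
  induction d with
  | zero =>
    intro i i' h
    have : i' = i := Fin.ext (by omega)
    subst this; omega
  | succ d ih =>
    intro i i' h
    have hlt : (i : ℕ) + d < p := by have := i'.isLt; omega
    set i'' : Fin p := ⟨(i : ℕ) + d, hlt⟩ with hi''
    have h1 : f i'' + d ≤ f i := ih i i'' rfl
    have h2 : f i' < f i'' := hf (by simp [hi'', Fin.lt_def]; omega)
    omega



variable (m n) in
/-- Reversal composed with the sum decomposition. -/
def cE : Fin (m + n) ≃ (Fin m ⊕ Fin n) := Fin.revPerm.trans finSumFinEquiv.symm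

lemma cE_apply (p : Fin (m + n)) : cE m n p = finSumFinEquiv.symm p.rev := rfl

variable (m n) in
/-- The key permutation attached to a partition in the box. -/
noncomputable def psi (lam : Fin m → ℕ) (hlam : Antitone lam) (hbd : ∀ i, lam i ≤ n) :
    Equiv.Perm (Fin m ⊕ Fin n) := (bigW m n lam hlam hbd).trans (cE m n)

lemma psi_apply {lam : Fin m → ℕ} (hlam : Antitone lam) (hbd : ∀ i, lam i ≤ n)
    (c : Fin m ⊕ Fin n) : psi m n lam hlam hbd c = cE m n (bigW m n lam hlam hbd c) := rfl

lemma boxComplConj_full {lam : Fin m → ℕ} (hfull : ∀ i, lam i = n) (j : Fin n) :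
    boxComplConj m n lam j = 0 := by
  classical
  unfold boxComplConj
  rw [Finset.card_eq_zero, Finset.filter_eq_empty_iff]
  intro i _
  have := j.isLt
  rw [hfull i]
  omega

lemma psi_full {lam : Fin m → ℕ} (hlam : Antitone lam) (hbd : ∀ i, lam i ≤ n)
    (hfull : ∀ i, lam i = n) : psi m n lam hlam hbd = 1 := by
  apply Equiv.ext
  intro c
  match c with
  | Sum.inl i =>
    have hval : (aF m n lam hbd i).rev = Fin.castAdd n i := by
      apply Fin.ext
      rw [Fin.val_rev]
      show m + n - ((aexp m lam i) + 1) = (i : ℕ)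
      have := i.isLt
      unfold aexp
      rw [hfull i]
      omega
    show cE m n (aF m n lam hbd i) = Sum.inl i
    rw [cE_apply, hval, finSumFinEquiv_symm_apply_castAdd]
  | Sum.inr j =>
    have hval : (bF m n lam j).rev = Fin.natAdd m j := by
      apply Fin.ext
      rw [Fin.val_rev]
      show m + n - ((bexp m n lam j) + 1) = m + (j : ℕ)
      have := j.isLt
      unfold bexp
      rw [boxComplConj_full hfull j]
      omega
    show cE m n (bF m n lam j) = Sum.inr j
    rw [cE_apply, hval, finSumFinEquiv_symm_apply_natAdd]

lemma sign_psi_mul : ∀ (d : ℕ) (lam : Fin m → ℕ) (hlam : Antitone lam)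
    (hbd : ∀ i, lam i ≤ n), (∑ i, (n - lam i)) = d →
    ((Equiv.Perm.sign (psi m n lam hlam hbd) : ℤ)) * (-1) ^ (∑ j, bexp m n lam j)
      = (-1) ^ (∑ j : Fin n, (n - 1 - (j : ℕ))) := by
  intro d
  induction d with
  | zero =>
    intro lam hlam hbd hsum
    have hfull : ∀ i, lam i = n := by
      intro i
      have h0 : n - lam i = 0 :=
        Finset.sum_eq_zero_iff.mp hsum i (Finset.mem_univ i)
      have := hbd i
      omega
    have hb : (∑ j, bexp m n lam j) = ∑ j : Fin n, (n - 1 - (j : ℕ)) := by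
      apply Finset.sum_congr rfl
      intro j _
      unfold bexp
      rw [boxComplConj_full hfull j]
      omega
    rw [psi_full hlam hbd hfull, hb]
    simp
  | succ d ih =>
    intro lam hlam hbd hsum
    classical
    -- the first row where a box can be added
    have hne : (Finset.univ.filter fun i : Fin m => lam i < n).Nonempty := by
      rw [Finset.filter_nonempty_iff]
      by_contra h
      push_neg at h
      have : ∀ i ∈ (Finset.univ : Finset (Fin m)), n - lam i = 0 := by
        intro i _
        have h1 := h i (Finset.mem_univ i)
        have h2 := hbd i
        omega
      rw [Finset.sum_eq_zero this] at hsum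
      omega
    set i₀ := (Finset.univ.filter fun i : Fin m => lam i < n).min' hne with hi₀def
    have hi₀mem := (Finset.univ.filter fun i : Fin m => lam i < n).min'_mem hne
    have hi₀ : lam i₀ < n := (Finset.mem_filter.mp hi₀mem).2
    have hmin : ∀ i, i < i₀ → lam i = n := by
      intro i hi
      by_contra h
      have hlt : lam i < n := lt_of_le_of_ne (hbd i) h
      have : i₀ ≤ i := Finset.min'_le _ _ (Finset.mem_filter.mpr ⟨Finset.mem_univ i, hlt⟩)
      exact absurd hi (not_lt.mpr this)
    set lam' := Function.update lam i₀ (lam i₀ + 1) with hlam'def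
    have hlam'app : ∀ i, i ≠ i₀ → lam' i = lam i := fun i h => Function.update_of_ne h _ _
    have hlam'i₀ : lam' i₀ = lam i₀ + 1 := Function.update_self _ _ _
    have hlam' : Antitone lam' := by
      intro i i' hle
      by_cases hi' : i' = i₀
      · by_cases hi : i = i₀
        · rw [hi, hi']
        · have hlt : i < i₀ := lt_of_le_of_ne (hi' ▸ hle) hi
          rw [hi', hlam'i₀, hlam'app i hi, hmin i hlt]
          omega
      · rw [hlam'app i' hi']
        by_cases hi : i = i₀
        · have hx := hlam hle
          rw [hi] at hx
          rw [hi, hlam'i₀]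
          omega
        · rw [hlam'app i hi]
          exact hlam hle
    have hbd' : ∀ i, lam' i ≤ n := by
      intro i
      by_cases hi : i = i₀
      · rw [hi, hlam'i₀]; omega
      · rw [hlam'app i hi]; exact hbd i
    have hsum' : (∑ i, (n - lam' i)) = d := by
      have e1 : (n - lam' i₀) + ∑ x ∈ Finset.univ.erase i₀, (n - lam' x)
          = ∑ x : Fin m, (n - lam' x) :=
        Finset.add_sum_erase Finset.univ (fun i => n - lam' i) (Finset.mem_univ i₀)
      have e2 : (n - lam i₀) + ∑ x ∈ Finset.univ.erase i₀, (n - lam x)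
          = ∑ x : Fin m, (n - lam x) :=
        Finset.add_sum_erase Finset.univ (fun i => n - lam i) (Finset.mem_univ i₀)
      have e3 : (∑ i ∈ Finset.univ.erase i₀, (n - lam' i))
          = ∑ i ∈ Finset.univ.erase i₀, (n - lam i) := by
        apply Finset.sum_congr rfl
        intro i hi
        rw [hlam'app i (Finset.ne_of_mem_erase hi)]
      rw [hsum] at e2
      rw [hlam'i₀] at e1
      omega
    have haexp' : aexp m lam' i₀ = aexp m lam i₀ + 1 := by
      unfold aexp; rw [hlam'i₀]; omega
    have haexpne : ∀ i, i ≠ i₀ → aexp m lam' i = aexp m lam i := by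
      intro i hi; unfold aexp; rw [hlam'app i hi]
    set uF := aF m n lam hbd i₀ with huF
    set vF := aF m n lam' hbd' i₀ with hvF
    have hval_uF : (uF : ℕ) = aexp m lam i₀ := rfl
    have hval_vF : (vF : ℕ) = aexp m lam i₀ + 1 := haexp'
    have hne_uv : uF ≠ vF := Fin.ne_of_val_ne (by omega)
    have hW : bigW m n lam' hlam' hbd' =
        (bigW m n lam hlam hbd).trans (Equiv.swap uF vF) := by
      apply equiv_eq_of_inl_eq
      · intro k
        show aF m n lam' hbd' k = Equiv.swap uF vF (aF m n lam hbd k)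
        by_cases hk : k = i₀
        · rw [hk]
          show vF = Equiv.swap uF vF uF
          rw [Equiv.swap_apply_left]
        · have hne1 : aF m n lam hbd k ≠ uF :=
            Fin.ne_of_val_ne ((aexp_strictAnti hlam).injective.ne hk)
          have hne2 : aF m n lam hbd k ≠ vF := by
            apply Fin.ne_of_val_ne
            rw [hval_vF]
            show aexp m lam k ≠ aexp m lam i₀ + 1
            rcases Ne.lt_or_gt hk with hlt | hlt
            · have hlk := hmin k hlt
              have h1 : (k : ℕ) < (i₀ : ℕ) := hlt
              have h2 := i₀.isLt
              unfold aexp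
              rw [hlk]
              omega
            · have := aexp_strictAnti hlam hlt
              omega
          rw [Equiv.swap_apply_of_ne_of_ne hne1 hne2]
          exact Fin.ext (haexpne k hk)
      · intro j j' h
        exact (bexp_strictAnti lam') h
      · intro j j' h
        have hbj : bexp m n lam j' < bexp m n lam j := bexp_strictAnti lam h
        have h1 : bF m n lam j ≠ uF :=
          Fin.ne_of_val_ne fun hh => (aexp_ne_bexp hlam hbd i₀ j) hh.symm
        have h1' : bF m n lam j' ≠ uF :=
          Fin.ne_of_val_ne fun hh => (aexp_ne_bexp hlam hbd i₀ j') hh.symm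
        have hvne1 : bexp m n lam j ≠ aexp m lam i₀ :=
          fun hh => (aexp_ne_bexp hlam hbd i₀ j) hh.symm
        have hvne1' : bexp m n lam j' ≠ aexp m lam i₀ :=
          fun hh => (aexp_ne_bexp hlam hbd i₀ j') hh.symm
        show Equiv.swap uF vF (bF m n lam j') < Equiv.swap uF vF (bF m n lam j)
        by_cases h2 : bF m n lam j = vF
        · have hv2 : bexp m n lam j = aexp m lam i₀ + 1 := by
            have := congrArg Fin.val h2
            rw [hval_vF] at this
            exact this
          have h2' : bF m n lam j' ≠ vF := by
            apply Fin.ne_of_val_ne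
            rw [hval_vF]
            show bexp m n lam j' ≠ aexp m lam i₀ + 1
            omega
          rw [h2, Equiv.swap_apply_right, Equiv.swap_apply_of_ne_of_ne h1' h2']
          rw [Fin.lt_def, hval_uF]
          show bexp m n lam j' < aexp m lam i₀
          omega
        · rw [Equiv.swap_apply_of_ne_of_ne h1 h2]
          by_cases h2' : bF m n lam j' = vF
          · have hv2' : bexp m n lam j' = aexp m lam i₀ + 1 := by
              have := congrArg Fin.val h2'
              rw [hval_vF] at this
              exact this
            rw [h2', Equiv.swap_apply_right]
            rw [Fin.lt_def, hval_uF]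
            show aexp m lam i₀ < bexp m n lam j
            omega
          · rw [Equiv.swap_apply_of_ne_of_ne h1' h2']
            exact hbj
    have hpsi : psi m n lam' hlam' hbd' =
        Equiv.swap (cE m n uF) (cE m n vF) * psi m n lam hlam hbd := by
      apply Equiv.ext
      intro c
      have h2 := DFunLike.congr_fun (Equiv.symm_trans_swap_trans uF vF (cE m n))
        ((cE m n) ((bigW m n lam hlam hbd) c))
      simp only [Equiv.trans_apply, Equiv.symm_apply_apply] at h2
      show (cE m n) ((bigW m n lam' hlam' hbd') c) = _
      rw [hW]
      simp only [Equiv.trans_apply]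
      rw [h2]
      rfl
    have hsignZ : ((Equiv.Perm.sign (psi m n lam' hlam' hbd') : ℤ)) =
        -((Equiv.Perm.sign (psi m n lam hlam hbd) : ℤ)) := by
      have hcne : cE m n uF ≠ cE m n vF := (cE m n).injective.ne hne_uv
      rw [hpsi, map_mul, Equiv.Perm.sign_swap hcne]
      push_cast
      ring
    -- sums of exponents
    have hsa : (∑ i, aexp m lam' i) = (∑ i, aexp m lam i) + 1 := by
      have e1 : aexp m lam' i₀ + ∑ x ∈ Finset.univ.erase i₀, aexp m lam' x
          = ∑ x : Fin m, aexp m lam' x :=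
        Finset.add_sum_erase Finset.univ (fun i => aexp m lam' i) (Finset.mem_univ i₀)
      have e2 : aexp m lam i₀ + ∑ x ∈ Finset.univ.erase i₀, aexp m lam x
          = ∑ x : Fin m, aexp m lam x :=
        Finset.add_sum_erase Finset.univ (fun i => aexp m lam i) (Finset.mem_univ i₀)
      have e3 : (∑ i ∈ Finset.univ.erase i₀, aexp m lam' i)
          = ∑ i ∈ Finset.univ.erase i₀, aexp m lam i := by
        apply Finset.sum_congr rfl
        intro i hi
        exact haexpne i (Finset.ne_of_mem_erase hi)
      omega
    have hs1 := sum_aexp_add_sum_bexp hlam hbd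
    have hs2 := sum_aexp_add_sum_bexp hlam' hbd'
    have hSb : (∑ j, bexp m n lam j) = (∑ j, bexp m n lam' j) + 1 := by omega
    have IH := ih lam' hlam' hbd' hsum'
    have hflip : ((Equiv.Perm.sign (psi m n lam hlam hbd) : ℤ)) =
        -((Equiv.Perm.sign (psi m n lam' hlam' hbd') : ℤ)) := by omega
    rw [hSb, pow_succ, hflip]
    linear_combination IH


variable (m n) in
/-- The permutation attached to a triple `(lam, pi, rho)`. -/
noncomputable def Phi (lam : Fin m → ℕ) (hlam : Antitone lam) (hbd : ∀ i, lam i ≤ n)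
    (pi : Equiv.Perm (Fin m)) (rho : Equiv.Perm (Fin n)) : Equiv.Perm (Fin m ⊕ Fin n) :=
  (Equiv.sumCongr pi rho).trans (psi m n lam hlam hbd)

lemma Phi_inl {lam : Fin m → ℕ} (hlam : Antitone lam) (hbd : ∀ i, lam i ≤ n)
    (pi : Equiv.Perm (Fin m)) (rho : Equiv.Perm (Fin n)) (k : Fin m) :
    Phi m n lam hlam hbd pi rho (Sum.inl k) = cE m n (aF m n lam hbd (pi k)) := rfl

lemma Phi_inr {lam : Fin m → ℕ} (hlam : Antitone lam) (hbd : ∀ i, lam i ≤ n)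
    (pi : Equiv.Perm (Fin m)) (rho : Equiv.Perm (Fin n)) (l : Fin n) :
    Phi m n lam hlam hbd pi rho (Sum.inr l) = cE m n (bF m n lam (rho l)) := rfl

lemma sign_Phi {lam : Fin m → ℕ} (hlam : Antitone lam) (hbd : ∀ i, lam i ≤ n)
    (pi : Equiv.Perm (Fin m)) (rho : Equiv.Perm (Fin n)) :
    Equiv.Perm.sign (Phi m n lam hlam hbd pi rho)
      = Equiv.Perm.sign (psi m n lam hlam hbd) * Equiv.Perm.sign pi * Equiv.Perm.sign rho := by
  have : Phi m n lam hlam hbd pi rho = psi m n lam hlam hbd * Equiv.sumCongr pi rho :=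
    (Equiv.Perm.mul_def _ _).symm ▸ rfl
  rw [this, map_mul, Equiv.Perm.sign_sumCongr, mul_assoc]

lemma Phi_injective {lam lam' : Fin m → ℕ} (hlam : Antitone lam) (hbd : ∀ i, lam i ≤ n)
    (hlam' : Antitone lam') (hbd' : ∀ i, lam' i ≤ n)
    {pi pi' : Equiv.Perm (Fin m)} {rho rho' : Equiv.Perm (Fin n)}
    (h : Phi m n lam hlam hbd pi rho = Phi m n lam' hlam' hbd' pi' rho') :
    lam = lam' ∧ pi = pi' ∧ rho = rho' := by
  have hA : ∀ k, aF m n lam hbd (pi k) = aF m n lam' hbd' (pi' k) := by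
    intro k
    have h0 := DFunLike.congr_fun h (Sum.inl k)
    rw [Phi_inl, Phi_inl] at h0
    exact (cE m n).injective h0
  have hB : ∀ l, bF m n lam (rho l) = bF m n lam' (rho' l) := by
    intro l
    have h0 := DFunLike.congr_fun h (Sum.inr l)
    rw [Phi_inr, Phi_inr] at h0
    exact (cE m n).injective h0
  have hrange : Set.range (aexp m lam) = Set.range (aexp m lam') := by
    ext t
    constructor
    · rintro ⟨i, rfl⟩
      refine ⟨pi' (pi.symm i), ?_⟩
      have h0 : aexp m lam (pi (pi.symm i)) = aexp m lam' (pi' (pi.symm i)) :=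
        congrArg Fin.val (hA (pi.symm i))
      rw [pi.apply_symm_apply] at h0
      exact h0.symm
    · rintro ⟨i, rfl⟩
      refine ⟨pi (pi'.symm i), ?_⟩
      have h0 : aexp m lam (pi (pi'.symm i)) = aexp m lam' (pi' (pi'.symm i)) :=
        congrArg Fin.val (hA (pi'.symm i))
      rw [pi'.apply_symm_apply] at h0
      exact h0
  have haexp_eq : aexp m lam = aexp m lam' :=
    ((aexp_strictAnti hlam).range_inj (aexp_strictAnti hlam')).mp hrange
  have hlameq : lam = lam' := by
    funext i
    have h0 := congrFun haexp_eq i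
    unfold aexp at h0
    omega
  subst hlameq
  have hpi : pi = pi' := Equiv.ext fun k =>
    (aexp_strictAnti hlam).injective (congrArg Fin.val (hA k))
  have hrho : rho = rho' := Equiv.ext fun l =>
    (bexp_strictAnti lam).injective (congrArg Fin.val (hB l))
  exact ⟨rfl, hpi, hrho⟩

lemma Phi_surjective (sigma : Equiv.Perm (Fin m ⊕ Fin n)) :
    ∃ (lam : Fin m → ℕ) (hlam : Antitone lam) (hbd : ∀ i, lam i ≤ n)
      (pi : Equiv.Perm (Fin m)) (rho : Equiv.Perm (Fin n)),
      Phi m n lam hlam hbd pi rho = sigma := by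
  classical
  set W₀ : (Fin m ⊕ Fin n) ≃ Fin (m + n) := sigma.trans (cE m n).symm with hW₀
  set g : Fin m → Fin (m + n) := fun k => W₀ (Sum.inl k) with hg
  have hginj : Function.Injective g := fun k k' h => Sum.inl_injective (W₀.injective h)
  set s : Finset (Fin (m + n)) := Finset.univ.image g with hs
  have hscard : s.card = m := by
    rw [hs, Finset.card_image_of_injective _ hginj, Finset.card_univ, Fintype.card_fin]
  set o := s.orderIsoOfFin hscard with ho
  set A : Fin m → Fin (m + n) := fun i => (o (Fin.rev i) : Fin (m + n)) with hA
  have hAanti : StrictAnti A := by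
    intro i i' h
    have h2 : Fin.rev i' < Fin.rev i := Fin.rev_lt_rev.mpr h
    exact Subtype.coe_lt_coe.mpr (o.strictMono h2)
  have hAanti' : StrictAnti fun i => ((A i : ℕ)) := fun i i' h => hAanti h
  have hgap := strictAnti_gap hAanti'
  have hlow : ∀ i : Fin m, m - 1 - (i : ℕ) ≤ (A i : ℕ) := by
    intro i
    have hpos : 0 < m := i.pos
    have hlt : m - 1 < m := by omega
    have h0 := hgap ((m - 1) - (i : ℕ)) i ⟨m - 1, hlt⟩ (by simp; omega)
    omega
  have hhigh : ∀ i : Fin m, (A i : ℕ) + (i : ℕ) ≤ m + n - 1 := by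
    intro i
    have hpos : 0 < m := i.pos
    have h0 := hgap (i : ℕ) ⟨0, hpos⟩ i (by simp)
    have h1 := (A ⟨0, hpos⟩).isLt
    omega
  set lam : Fin m → ℕ := fun i => (A i : ℕ) - (m - 1 - (i : ℕ)) with hlamdef
  have haA : ∀ i, aexp m lam i = (A i : ℕ) := by
    intro i
    have := hlow i
    unfold aexp
    simp only [hlamdef]
    omega
  have hlam : Antitone lam := by
    intro i i' hle
    have hv : (i : ℕ) ≤ (i' : ℕ) := hle
    have hg2 := hgap ((i' : ℕ) - (i : ℕ)) i i' (by omega)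
    have h3 := hlow i'
    have h4 := i'.isLt
    simp only [hlamdef]
    omega
  have hbd : ∀ i, lam i ≤ n := by
    intro i
    have h1 := hhigh i
    have h2 := hlow i
    have h3 := i.isLt
    simp only [hlamdef]
    omega
  have haF : ∀ i, aF m n lam hbd i = A i := fun i => Fin.ext (haA i)
  have hmem : ∀ k, g k ∈ s := fun k => Finset.mem_image_of_mem g (Finset.mem_univ k)
  set pi0 : Fin m → Fin m := fun k => Fin.rev (o.symm ⟨g k, hmem k⟩) with hpi0
  have hpi0inj : Function.Injective pi0 := by
    intro k k' h
    simp only [hpi0] at h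
    have h1 := Fin.rev_injective h
    have h2 := o.symm.injective h1
    exact hginj (Subtype.mk_eq_mk.mp h2)
  set pi : Equiv.Perm (Fin m) :=
    Equiv.ofBijective pi0 (Finite.injective_iff_bijective.mp hpi0inj) with hpidef
  have hApi : ∀ k, A (pi k) = g k := by
    intro k
    show A (pi0 k) = g k
    simp only [hpi0, hA, Fin.rev_rev, OrderIso.apply_symm_apply]
  have hr1 : Set.range (fun j => bF m n lam j)
      = (Set.range (fun k => aF m n lam hbd k))ᶜ :=
    range_inr_eq_compl (bigW m n lam hlam hbd)
  have hr2 : Set.range (fun j => W₀ (Sum.inr j)) = (Set.range g)ᶜ :=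
    range_inr_eq_compl W₀
  have hrA : Set.range (fun k => aF m n lam hbd k) = Set.range g := by
    ext t
    constructor
    · rintro ⟨k, rfl⟩
      show aF m n lam hbd k ∈ Set.range g
      rw [haF k]
      have hmem2 : A k ∈ Finset.image g Finset.univ := (o (Fin.rev k)).2
      rw [Finset.mem_image] at hmem2
      obtain ⟨k', _, hk'⟩ := hmem2
      exact ⟨k', hk'⟩
    · rintro ⟨k, rfl⟩
      exact ⟨pi k, by show aF m n lam hbd (pi k) = g k; rw [haF, hApi]⟩
  have hrbW : Set.range (fun j => bF m n lam j) = Set.range (fun j => W₀ (Sum.inr j)) := by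
    rw [hr1, hr2, hrA]
  have hbmem : ∀ l, ∃ j, bF m n lam j = W₀ (Sum.inr l) := by
    intro l
    have hx : W₀ (Sum.inr l) ∈ Set.range (fun j => bF m n lam j) := by
      rw [hrbW]; exact ⟨l, rfl⟩
    exact hx
  choose rho0 hrho0 using hbmem
  have hrho0inj : Function.Injective rho0 := by
    intro l l' h
    have hx : W₀ (Sum.inr l) = W₀ (Sum.inr l') := by rw [← hrho0 l, ← hrho0 l', h]
    exact Sum.inr_injective (W₀.injective hx)
  set rho : Equiv.Perm (Fin n) :=
    Equiv.ofBijective rho0 (Finite.injective_iff_bijective.mp hrho0inj) with hrhodef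
  refine ⟨lam, hlam, hbd, pi, rho, ?_⟩
  apply Equiv.ext
  intro c
  match c with
  | Sum.inl k =>
    rw [Phi_inl, haF, hApi]
    show cE m n (W₀ (Sum.inl k)) = sigma (Sum.inl k)
    rw [hW₀]
    exact (cE m n).apply_symm_apply _
  | Sum.inr l =>
    rw [Phi_inr]
    rw [show bF m n lam (rho l) = W₀ (Sum.inr l) from hrho0 l]
    rw [hW₀]
    exact (cE m n).apply_symm_apply _



section RingLemmas
open Matrix

variable {R : Type*} [CommRing R]

lemma det_alt {p : ℕ} (v : Fin p → R) (f : Fin p → ℕ) :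
    (Matrix.of fun i k : Fin p => v k ^ f i).det
      = ∑ pi : Equiv.Perm (Fin p), ((Equiv.Perm.sign pi : ℤ) : R) * ∏ i, v i ^ f (pi i) := by
  rw [Matrix.det_apply']
  rfl

lemma prod_rev_pairs {p : ℕ} (f : Fin p → Fin p → R) :
    (∏ i : Fin p, ∏ j ∈ Finset.Ioi i, f (Fin.rev j) (Fin.rev i))
      = ∏ i : Fin p, ∏ j ∈ Finset.Ioi i, f i j := by
  rw [Finset.prod_sigma', Finset.prod_sigma']
  refine Finset.prod_bij' (fun q _ => ⟨Fin.rev q.2, Fin.rev q.1⟩)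
    (fun q _ => ⟨Fin.rev q.2, Fin.rev q.1⟩) ?_ ?_ ?_ ?_ ?_
  · intro a ha
    simp only [Finset.mem_sigma, Finset.mem_univ, Finset.mem_Ioi, true_and] at ha ⊢
    exact Fin.rev_lt_rev.mpr ha
  · intro a ha
    simp only [Finset.mem_sigma, Finset.mem_univ, Finset.mem_Ioi, true_and] at ha ⊢
    exact Fin.rev_lt_rev.mpr ha
  · intro a _
    simp [Fin.rev_rev]
  · intro a _
    simp [Fin.rev_rev]
  · intro a _
    rfl

lemma det_altRev {p : ℕ} (v : Fin p → R) :
    (Matrix.of fun i k : Fin p => v k ^ (p - 1 - (i : ℕ))).det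
      = ∏ i : Fin p, ∏ j ∈ Finset.Ioi i, (v i - v j) := by
  have hm : (Matrix.of fun i k : Fin p => v k ^ (p - 1 - (i : ℕ)))
      = ((Matrix.vandermonde (v ∘ Fin.rev)).submatrix
          (Fin.revPerm : Equiv.Perm (Fin p)) (Fin.revPerm : Equiv.Perm (Fin p)))ᵀ := by
    ext i k
    simp only [Matrix.transpose_apply, Matrix.submatrix_apply, Matrix.vandermonde_apply,
      Function.comp_apply, Fin.revPerm_apply, Fin.rev_rev, Matrix.of_apply]
    congr 1
    rw [Fin.val_rev]
    omega
  rw [hm, Matrix.det_transpose, Matrix.det_submatrix_equiv_self, Matrix.det_vandermonde]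
  exact prod_rev_pairs (fun a b => v a - v b)

lemma prod_ite_lt_eq_Ioi {p : ℕ} (f : Fin p → Fin p → R) :
    (∏ a : Fin p, ∏ b : Fin p, if (a : ℕ) < (b : ℕ) then f a b else 1)
      = ∏ a : Fin p, ∏ b ∈ Finset.Ioi a, f a b := by
  apply Finset.prod_congr rfl
  intro a _
  have hIoi : Finset.Ioi a = Finset.univ.filter (fun b => a < b) := by
    ext b; simp
  rw [hIoi, Finset.prod_filter]
  apply Finset.prod_congr rfl
  intro b _
  congr 1

lemma vandermonde_split {m n : ℕ} (x : Fin m → R) (y : Fin n → R) :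
    (∏ p : Fin (m + n), ∏ q ∈ Finset.Ioi p,
        (Sum.elim x (fun j => -(y j)) (finSumFinEquiv.symm p)
          - Sum.elim x (fun j => -(y j)) (finSumFinEquiv.symm q)))
      = ((∏ i : Fin m, ∏ j ∈ Finset.Ioi i, (x i - x j))
        * (∏ i : Fin m, ∏ j : Fin n, (x i + y j)))
        * ((-1) ^ (∑ j : Fin n, (n - 1 - (j : ℕ)))
            * ∏ i : Fin n, ∏ j ∈ Finset.Ioi i, (y i - y j)) := by
  classical
  set z : (Fin m ⊕ Fin n) → R := Sum.elim x (fun j => -(y j)) with hz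
  have h1 : (∏ p : Fin (m + n), ∏ q ∈ Finset.Ioi p,
        (z (finSumFinEquiv.symm p) - z (finSumFinEquiv.symm q)))
      = ∏ c : Fin m ⊕ Fin n, ∏ d : Fin m ⊕ Fin n,
          (if ((finSumFinEquiv c : ℕ) < (finSumFinEquiv d : ℕ)) then z c - z d else 1) := by
    rw [← Equiv.prod_comp finSumFinEquiv
      (fun p => ∏ q ∈ Finset.Ioi p, (z (finSumFinEquiv.symm p) - z (finSumFinEquiv.symm q)))]
    apply Finset.prod_congr rfl
    intro c _
    have hIoi : Finset.Ioi (finSumFinEquiv c)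
        = Finset.univ.filter (fun q => finSumFinEquiv c < q) := by
      ext q; simp
    rw [hIoi, Finset.prod_filter,
      ← Equiv.prod_comp finSumFinEquiv
        (fun q => if finSumFinEquiv c < q then
          z (finSumFinEquiv.symm (finSumFinEquiv c)) - z (finSumFinEquiv.symm q) else 1)]
    simp only [Equiv.symm_apply_apply]
    rfl
  rw [h1]
  rw [Fintype.prod_sum_type]
  have hB1 : ∀ i : Fin m, (∏ d : Fin m ⊕ Fin n,
      (if ((finSumFinEquiv ((Sum.inl i : Fin m ⊕ Fin n)) : ℕ) < (finSumFinEquiv d : ℕ)) then z (Sum.inl i) - z d else 1))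
      = (∏ i' : Fin m, if (i : ℕ) < (i' : ℕ) then x i - x i' else 1) * ∏ j : Fin n, (x i + y j) := by
    intro i
    rw [Fintype.prod_sum_type]
    refine congrArg₂ (· * ·) ?_ ?_
    · apply Finset.prod_congr rfl
      intro i' _
      simp [finSumFinEquiv_apply_left, hz]
    · apply Finset.prod_congr rfl
      intro j _
      have hcond : ((finSumFinEquiv ((Sum.inl i : Fin m ⊕ Fin n)) : ℕ)
          < (finSumFinEquiv ((Sum.inr j : Fin m ⊕ Fin n)) : ℕ)) := by
        simp only [finSumFinEquiv_apply_left, finSumFinEquiv_apply_right,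
          Fin.coe_castAdd, Fin.coe_natAdd]
        have := i.isLt
        omega
      rw [if_pos hcond]
      simp [hz, sub_neg_eq_add]
  have hB2 : ∀ j : Fin n, (∏ d : Fin m ⊕ Fin n,
      (if ((finSumFinEquiv ((Sum.inr j : Fin m ⊕ Fin n)) : ℕ) < (finSumFinEquiv d : ℕ)) then z (Sum.inr j) - z d else 1))
      = ∏ j' : Fin n, if (j : ℕ) < (j' : ℕ) then (y j' - y j) else 1 := by
    intro j
    rw [Fintype.prod_sum_type]
    have hleft : (∏ i : Fin m,
        (if ((finSumFinEquiv ((Sum.inr j : Fin m ⊕ Fin n)) : ℕ) < (finSumFinEquiv ((Sum.inl i : Fin m ⊕ Fin n)) : ℕ)) then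
          z (Sum.inr j) - z (Sum.inl i) else 1)) = 1 := by
      apply Finset.prod_eq_one
      intro i _
      rw [if_neg]
      simp only [finSumFinEquiv_apply_left, finSumFinEquiv_apply_right,
        Fin.coe_castAdd, Fin.coe_natAdd]
      have := i.isLt
      omega
    rw [hleft, one_mul]
    apply Finset.prod_congr rfl
    intro j' _
    simp only [finSumFinEquiv_apply_right, Fin.coe_natAdd, hz, Sum.elim_inr]
    have hcond : (m + (j : ℕ) < m + (j' : ℕ)) ↔ ((j : ℕ) < (j' : ℕ)) := by omega
    by_cases hc : (j : ℕ) < (j' : ℕ)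
    · rw [if_pos (hcond.mpr hc), if_pos hc]
      ring
    · rw [if_neg (fun hh => hc (hcond.mp hh)), if_neg hc]
  rw [Finset.prod_congr rfl (fun i _ => hB1 i), Finset.prod_congr rfl (fun j _ => hB2 j)]
  rw [Finset.prod_mul_distrib, prod_ite_lt_eq_Ioi, prod_ite_lt_eq_Ioi (fun a b => y b - y a)]
  have hlast : (∏ a : Fin n, ∏ b ∈ Finset.Ioi a, (y b - y a))
      = (-1) ^ (∑ j : Fin n, (n - 1 - (j : ℕ)))
          * ∏ i : Fin n, ∏ j ∈ Finset.Ioi i, (y i - y j) := by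
    have hstep : ∀ a : Fin n, (∏ b ∈ Finset.Ioi a, (y b - y a))
        = (-1) ^ (n - 1 - (a : ℕ)) * ∏ b ∈ Finset.Ioi a, (y a - y b) := by
      intro a
      have : ∀ b ∈ Finset.Ioi a, y b - y a = -1 * (y a - y b) := by
        intro b _; ring
      rw [Finset.prod_congr rfl this, Finset.prod_mul_distrib, Finset.prod_const,
        Fin.card_Ioi]
    rw [Finset.prod_congr rfl (fun a _ => hstep a), Finset.prod_mul_distrib,
      Finset.prod_pow_eq_pow_sum]
  rw [hlast]

end RingLemmas


end DualCauchyAux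

open DualCauchyAux in
theorem dual_cauchy_alternants (m n : ℕ) (hm : 1 ≤ m) (hn : 1 ≤ n) :
    (∏ i : Fin m, ∏ j : Fin n,
        ((X (Sum.inl i) : MvPolynomial (Fin m ⊕ Fin n) ℤ) + X (Sum.inr j))) *
      (Matrix.of fun i k : Fin m =>
        (X (Sum.inl k) : MvPolynomial (Fin m ⊕ Fin n) ℤ) ^ (m - 1 - (i : ℕ))).det *
      (Matrix.of fun j l : Fin n =>
        (X (Sum.inr l) : MvPolynomial (Fin m ⊕ Fin n) ℤ) ^ (n - 1 - (j : ℕ))).det =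
    ∑ᶠ lam ∈ {lam : Fin m → ℕ | Antitone lam ∧ ∀ i, lam i ≤ n},
      (Matrix.of fun i k : Fin m =>
        (X (Sum.inl k) : MvPolynomial (Fin m ⊕ Fin n) ℤ) ^ (lam i + (m - 1 - (i : ℕ)))).det *
      (Matrix.of fun j l : Fin n =>
        (X (Sum.inr l) : MvPolynomial (Fin m ⊕ Fin n) ℤ) ^
          (boxComplConj m n lam j + (n - 1 - (j : ℕ)))).det := by
  classical
  have hS : Set.Finite {lam : Fin m → ℕ | Antitone lam ∧ ∀ i, lam i ≤ n} := by
    apply Set.Finite.subset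
      (Set.finite_range (fun g : Fin m → Fin (n + 1) => fun i => ((g i : ℕ))))
    rintro lam ⟨-, hbd⟩
    exact ⟨fun i => ⟨lam i, Nat.lt_succ_of_le (hbd i)⟩, rfl⟩
  rw [finsum_mem_eq_finite_toFinset_sum _ hS]
  -- notation
  set z : (Fin m ⊕ Fin n) → MvPolynomial (Fin m ⊕ Fin n) ℤ :=
    Sum.elim (fun i => X (Sum.inl i)) (fun j => -(X (Sum.inr j))) with hz
  set bigM : Matrix (Fin m ⊕ Fin n) (Fin m ⊕ Fin n) (MvPolynomial (Fin m ⊕ Fin n) ℤ) :=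
    Matrix.of (fun r c => z c ^ ((Fin.rev (finSumFinEquiv r) : ℕ))) with hbigM
  -- Step I : the big determinant as a product
  have hsub : bigM.submatrix (⇑(finSumFinEquiv.symm : Fin (m + n) ≃ (Fin m ⊕ Fin n)))
        ⇑(finSumFinEquiv.symm : Fin (m + n) ≃ (Fin m ⊕ Fin n))
      = Matrix.of (fun p q : Fin (m + n) =>
          z (finSumFinEquiv.symm q) ^ ((m + n) - 1 - (p : ℕ))) := by
    refine Matrix.ext fun p q => ?_
    simp only [hbigM, Matrix.submatrix_apply, Matrix.of_apply, Equiv.apply_symm_apply]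
    congr 1
    rw [Fin.val_rev]
    omega
  have hdet1 : bigM.det = ∏ p : Fin (m + n), ∏ q ∈ Finset.Ioi p,
      (z (finSumFinEquiv.symm p) - z (finSumFinEquiv.symm q)) := by
    rw [← Matrix.det_submatrix_equiv_self
      (finSumFinEquiv.symm : Fin (m + n) ≃ (Fin m ⊕ Fin n)) bigM, hsub]
    exact det_altRev (fun q => z (finSumFinEquiv.symm q))
  have hdet2 : bigM.det =
      ((∏ i : Fin m, ∏ j ∈ Finset.Ioi i,
          ((X (Sum.inl i) : MvPolynomial (Fin m ⊕ Fin n) ℤ) - X (Sum.inl j)))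
        * (∏ i : Fin m, ∏ j : Fin n,
          ((X (Sum.inl i) : MvPolynomial (Fin m ⊕ Fin n) ℤ) + X (Sum.inr j))))
        * ((-1) ^ (∑ j : Fin n, (n - 1 - (j : ℕ)))
            * ∏ i : Fin n, ∏ j ∈ Finset.Ioi i,
              ((X (Sum.inr i) : MvPolynomial (Fin m ⊕ Fin n) ℤ) - X (Sum.inr j))) := by
    rw [hdet1]
    exact vandermonde_split (fun i => X (Sum.inl i)) (fun j => X (Sum.inr j))
  -- Step II : the statement's Vandermonde determinants
  have hAx : (Matrix.of fun i k : Fin m =>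
        (X (Sum.inl k) : MvPolynomial (Fin m ⊕ Fin n) ℤ) ^ (m - 1 - (i : ℕ))).det
      = ∏ i : Fin m, ∏ j ∈ Finset.Ioi i,
          ((X (Sum.inl i) : MvPolynomial (Fin m ⊕ Fin n) ℤ) - X (Sum.inl j)) :=
    det_altRev (fun k => X (Sum.inl k))
  have hAy : (Matrix.of fun j l : Fin n =>
        (X (Sum.inr l) : MvPolynomial (Fin m ⊕ Fin n) ℤ) ^ (n - 1 - (j : ℕ))).det
      = ∏ i : Fin n, ∏ j ∈ Finset.Ioi i,
          ((X (Sum.inr i) : MvPolynomial (Fin m ⊕ Fin n) ℤ) - X (Sum.inr j)) :=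
    det_altRev (fun l => X (Sum.inr l))
  -- Step III : expansion of the alternant sum
  have hrevcE : ∀ p : Fin (m + n), (Fin.rev (finSumFinEquiv (cE m n p))) = p := by
    intro p
    rw [cE_apply, Equiv.apply_symm_apply, Fin.rev_rev]
  have hexpand : ∀ lam ∈ hS.toFinset,
      (-1 : MvPolynomial (Fin m ⊕ Fin n) ℤ) ^ (∑ j : Fin n, (n - 1 - (j : ℕ)))
        * ((Matrix.of fun i k : Fin m =>
            (X (Sum.inl k) : MvPolynomial (Fin m ⊕ Fin n) ℤ) ^ (lam i + (m - 1 - (i : ℕ)))).det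
          * (Matrix.of fun j l : Fin n =>
            (X (Sum.inr l) : MvPolynomial (Fin m ⊕ Fin n) ℤ) ^
              (boxComplConj m n lam j + (n - 1 - (j : ℕ)))).det)
      = ∑ pr : Equiv.Perm (Fin m) × Equiv.Perm (Fin n),
          ((-1 : MvPolynomial (Fin m ⊕ Fin n) ℤ) ^ (∑ j : Fin n, (n - 1 - (j : ℕ)))
            * (((Equiv.Perm.sign pr.1 : ℤ) : MvPolynomial (Fin m ⊕ Fin n) ℤ)
                * ∏ i : Fin m, (X (Sum.inl i) : MvPolynomial (Fin m ⊕ Fin n) ℤ)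
                    ^ (lam (pr.1 i) + (m - 1 - ((pr.1 i : Fin m) : ℕ))))
            * (((Equiv.Perm.sign pr.2 : ℤ) : MvPolynomial (Fin m ⊕ Fin n) ℤ)
                * ∏ j : Fin n, (X (Sum.inr j) : MvPolynomial (Fin m ⊕ Fin n) ℤ)
                    ^ (boxComplConj m n lam (pr.2 j) + (n - 1 - ((pr.2 j : Fin n) : ℕ))))) := by
    intro lam _
    have hdA : (Matrix.of fun i k : Fin m =>
          (X (Sum.inl k) : MvPolynomial (Fin m ⊕ Fin n) ℤ) ^ (lam i + (m - 1 - (i : ℕ)))).det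
        = ∑ pi : Equiv.Perm (Fin m), ((Equiv.Perm.sign pi : ℤ) : MvPolynomial (Fin m ⊕ Fin n) ℤ)
            * ∏ i : Fin m, (X (Sum.inl i) : MvPolynomial (Fin m ⊕ Fin n) ℤ)
                ^ (lam (pi i) + (m - 1 - ((pi i : Fin m) : ℕ))) :=
      det_alt (fun k => X (Sum.inl k)) (fun i => lam i + (m - 1 - (i : ℕ)))
    have hdB : (Matrix.of fun j l : Fin n =>
          (X (Sum.inr l) : MvPolynomial (Fin m ⊕ Fin n) ℤ) ^
            (boxComplConj m n lam j + (n - 1 - (j : ℕ)))).det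
        = ∑ rho : Equiv.Perm (Fin n), ((Equiv.Perm.sign rho : ℤ) : MvPolynomial (Fin m ⊕ Fin n) ℤ)
            * ∏ j : Fin n, (X (Sum.inr j) : MvPolynomial (Fin m ⊕ Fin n) ℤ)
                ^ (boxComplConj m n lam (rho j) + (n - 1 - ((rho j : Fin n) : ℕ))) :=
      det_alt (fun l => X (Sum.inr l)) (fun j => boxComplConj m n lam j + (n - 1 - (j : ℕ)))
    rw [hdA, hdB, Finset.sum_mul_sum, Finset.mul_sum]
    rw [Fintype.sum_prod_type]
    apply Finset.sum_congr rfl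
    intro pi _
    rw [Finset.mul_sum]
    apply Finset.sum_congr rfl
    intro rho _
    ring
  -- the bijective reindexing of the permutation sum
  have hbig : (∑ q ∈ hS.toFinset ×ˢ
        (Finset.univ : Finset (Equiv.Perm (Fin m) × Equiv.Perm (Fin n))),
        ((-1 : MvPolynomial (Fin m ⊕ Fin n) ℤ) ^ (∑ j : Fin n, (n - 1 - (j : ℕ)))
          * (((Equiv.Perm.sign q.2.1 : ℤ) : MvPolynomial (Fin m ⊕ Fin n) ℤ)
              * ∏ i : Fin m, (X (Sum.inl i) : MvPolynomial (Fin m ⊕ Fin n) ℤ)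
                  ^ (q.1 (q.2.1 i) + (m - 1 - ((q.2.1 i : Fin m) : ℕ))))
          * (((Equiv.Perm.sign q.2.2 : ℤ) : MvPolynomial (Fin m ⊕ Fin n) ℤ)
              * ∏ j : Fin n, (X (Sum.inr j) : MvPolynomial (Fin m ⊕ Fin n) ℤ)
                  ^ (boxComplConj m n q.1 (q.2.2 j) + (n - 1 - ((q.2.2 j : Fin n) : ℕ))))))
      = bigM.det := by
    rw [Matrix.det_apply']
    apply Finset.sum_bij (i := fun q hq =>
      Phi m n q.1 ((hS.mem_toFinset.mp (Finset.mem_product.mp hq).1).1)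
        ((hS.mem_toFinset.mp (Finset.mem_product.mp hq).1).2) q.2.1 q.2.2)
    · intro q hq
      exact Finset.mem_univ _
    · intro q1 h1 q2 h2 heq
      obtain ⟨hl, hp, hr⟩ := Phi_injective _ _ _ _ heq
      exact Prod.ext hl (Prod.ext hp hr)
    · intro sigma _
      obtain ⟨lam, hlam, hbd, pi, rho, hphi⟩ := Phi_surjective sigma
      exact ⟨(lam, (pi, rho)),
        Finset.mem_product.mpr ⟨hS.mem_toFinset.mpr ⟨hlam, hbd⟩, Finset.mem_univ _⟩, hphi⟩
    · intro q hq
      have hlam : Antitone q.1 := (hS.mem_toFinset.mp (Finset.mem_product.mp hq).1).1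
      have hbd : ∀ i, q.1 i ≤ n := (hS.mem_toFinset.mp (Finset.mem_product.mp hq).1).2
      have hprod : (∏ c : Fin m ⊕ Fin n,
          bigM ((Phi m n q.1 hlam hbd q.2.1 q.2.2) c) c)
          = (∏ k : Fin m, (X (Sum.inl k) : MvPolynomial (Fin m ⊕ Fin n) ℤ)
              ^ (q.1 (q.2.1 k) + (m - 1 - ((q.2.1 k : Fin m) : ℕ))))
            * ((-1 : MvPolynomial (Fin m ⊕ Fin n) ℤ) ^ (∑ j : Fin n, bexp m n q.1 j)
              * ∏ l : Fin n, (X (Sum.inr l) : MvPolynomial (Fin m ⊕ Fin n) ℤ)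
                  ^ (boxComplConj m n q.1 (q.2.2 l) + (n - 1 - ((q.2.2 l : Fin n) : ℕ)))) := by
        rw [Fintype.prod_sum_type]
        refine congrArg₂ (· * ·) ?_ ?_
        · apply Finset.prod_congr rfl
          intro k _
          show z (Sum.inl k)
              ^ ((Fin.rev (finSumFinEquiv
                ((Phi m n q.1 hlam hbd q.2.1 q.2.2) (Sum.inl k))) : ℕ)) = _
          rw [Phi_inl, hrevcE]
          rfl
        · have hstep : ∀ l : Fin n,
              bigM ((Phi m n q.1 hlam hbd q.2.1 q.2.2) (Sum.inr l)) (Sum.inr l)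
              = (-1 : MvPolynomial (Fin m ⊕ Fin n) ℤ) ^ (bexp m n q.1 (q.2.2 l))
                * (X (Sum.inr l) : MvPolynomial (Fin m ⊕ Fin n) ℤ)
                    ^ (bexp m n q.1 (q.2.2 l)) := by
            intro l
            show z (Sum.inr l)
              ^ ((Fin.rev (finSumFinEquiv
                ((Phi m n q.1 hlam hbd q.2.1 q.2.2) (Sum.inr l))) : ℕ)) = _
            rw [Phi_inr, hrevcE]
            show (-(X (Sum.inr l) : MvPolynomial (Fin m ⊕ Fin n) ℤ))
                ^ (bexp m n q.1 (q.2.2 l)) = _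
            rw [neg_pow]
          rw [Finset.prod_congr rfl (fun l _ => hstep l), Finset.prod_mul_distrib,
            Finset.prod_pow_eq_pow_sum, Equiv.sum_comp q.2.2 (bexp m n q.1)]
          rfl
      have hsign1 : ((Equiv.Perm.sign (Phi m n q.1 hlam hbd q.2.1 q.2.2) : ℤ)
            : MvPolynomial (Fin m ⊕ Fin n) ℤ)
          = ((Equiv.Perm.sign (psi m n q.1 hlam hbd) : ℤ) : MvPolynomial (Fin m ⊕ Fin n) ℤ)
            * ((Equiv.Perm.sign q.2.1 : ℤ) : MvPolynomial (Fin m ⊕ Fin n) ℤ)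
            * ((Equiv.Perm.sign q.2.2 : ℤ) : MvPolynomial (Fin m ⊕ Fin n) ℤ) := by
        rw [sign_Phi hlam hbd q.2.1 q.2.2, Units.val_mul, Units.val_mul,
          Int.cast_mul, Int.cast_mul]
      have hsign2 : ((Equiv.Perm.sign (psi m n q.1 hlam hbd) : ℤ)
            : MvPolynomial (Fin m ⊕ Fin n) ℤ)
          * (-1) ^ (∑ j : Fin n, bexp m n q.1 j)
          = (-1) ^ (∑ j : Fin n, (n - 1 - (j : ℕ))) := by
        have h0 := sign_psi_mul (∑ i, (n - q.1 i)) q.1 hlam hbd rfl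
        have h1 := congrArg (fun t : ℤ => ((t : MvPolynomial (Fin m ⊕ Fin n) ℤ))) h0
        push_cast at h1
        exact h1
      rw [hprod, hsign1]
      linear_combination
        (-(((Equiv.Perm.sign q.2.1 : ℤ) : MvPolynomial (Fin m ⊕ Fin n) ℤ)
          * ((Equiv.Perm.sign q.2.2 : ℤ) : MvPolynomial (Fin m ⊕ Fin n) ℤ)
          * (∏ i : Fin m, (X (Sum.inl i) : MvPolynomial (Fin m ⊕ Fin n) ℤ)
              ^ (q.1 (q.2.1 i) + (m - 1 - ((q.2.1 i : Fin m) : ℕ))))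
          * (∏ j : Fin n, (X (Sum.inr j) : MvPolynomial (Fin m ⊕ Fin n) ℤ)
              ^ (boxComplConj m n q.1 (q.2.2 j) + (n - 1 - ((q.2.2 j : Fin n) : ℕ))))))
          * hsign2
  -- assemble
  rw [Finset.sum_product] at hbig
  have hfin : (-1 : MvPolynomial (Fin m ⊕ Fin n) ℤ) ^ (∑ j : Fin n, (n - 1 - (j : ℕ)))
      * (∑ lam ∈ hS.toFinset,
        ((Matrix.of fun i k : Fin m =>
            (X (Sum.inl k) : MvPolynomial (Fin m ⊕ Fin n) ℤ) ^ (lam i + (m - 1 - (i : ℕ)))).det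
          * (Matrix.of fun j l : Fin n =>
            (X (Sum.inr l) : MvPolynomial (Fin m ⊕ Fin n) ℤ) ^
              (boxComplConj m n lam j + (n - 1 - (j : ℕ)))).det))
      = bigM.det := by
    rw [Finset.mul_sum, Finset.sum_congr rfl hexpand]
    exact hbig
  rw [hAx, hAy]
  set KK := ∑ j : Fin n, (n - 1 - (j : ℕ)) with hKK
  have hsq : ((-1 : MvPolynomial (Fin m ⊕ Fin n) ℤ) ^ KK) * ((-1) ^ KK) = 1 := by
    rw [← pow_add]
    exact Even.neg_one_pow ⟨KK, rfl⟩
  set PP := ∏ i : Fin m, ∏ j : Fin n,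
    ((X (Sum.inl i) : MvPolynomial (Fin m ⊕ Fin n) ℤ) + X (Sum.inr j)) with hPP
  set AX := ∏ i : Fin m, ∏ j ∈ Finset.Ioi i,
    ((X (Sum.inl i) : MvPolynomial (Fin m ⊕ Fin n) ℤ) - X (Sum.inl j)) with hAX
  set AY := ∏ i : Fin n, ∏ j ∈ Finset.Ioi i,
    ((X (Sum.inr i) : MvPolynomial (Fin m ⊕ Fin n) ℤ) - X (Sum.inr j)) with hAY
  set SS := ∑ lam ∈ hS.toFinset,
    ((Matrix.of fun i k : Fin m =>
        (X (Sum.inl k) : MvPolynomial (Fin m ⊕ Fin n) ℤ) ^ (lam i + (m - 1 - (i : ℕ)))).det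
      * (Matrix.of fun j l : Fin n =>
        (X (Sum.inr l) : MvPolynomial (Fin m ⊕ Fin n) ℤ) ^
          (boxComplConj m n lam j + (n - 1 - (j : ℕ)))).det) with hSS
  have heq := hfin.trans hdet2
  linear_combination (-((-1 : MvPolynomial (Fin m ⊕ Fin n) ℤ) ^ KK)) * heq
    + (SS - AX * PP * AY) * hsq
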